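/- Let C be a triangulated category with a bounded weight structure w and F : C → D an exact (triangulated) functor to a triangulated category with weight structure. If F sends the heart C^♥_w into D^♥_w, then F is weight-exact, i.e., F(C_{w≤0}) ⊆ D_{w≤0} and F(C_{w≥0}) ⊆ D_{w≥0}. -/

import Mathlib

open CategoryTheory Category Limits Pretriangulated

universe v u

variable (C : Type u) [Category.{v} C] [Preadditive C] [HasZeroObject C] [HasShift C ℤ]
  [∀ n : ℤ, (shiftFunctor C n).Additive] [Pretriangulated C]

/-- A weight structure on a (pre)triangulated category `C`, given by a pair of
retract-closed, isomorphism-closed full subcategories `C_{w≤0}` (the predicate `le0`)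
and `C_{w≥0}` (the predicate `ge0`) satisfying semi-invariance, weak orthogonality
and the existence of weight decompositions. -/
structure WeightStructure where
  /-- membership in `C_{w≤0}` -/
  le0 : C → Prop
  /-- membership in `C_{w≥0}` -/
  ge0 : C → Prop
  le0_iso : ∀ {X Y : C}, (X ≅ Y) → le0 X → le0 Y
  ge0_iso : ∀ {X Y : C}, (X ≅ Y) → ge0 X → ge0 Y
  le0_retract : ∀ {X Y : C} (i : X ⟶ Y) (r : Y ⟶ X), i ≫ r = 𝟙 X → le0 Y → le0 X
  ge0_retract : ∀ {X Y : C} (i : X ⟶ Y) (r : Y ⟶ X), i ≫ r = 𝟙 X → ge0 Y → ge0 X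
  ge0_shift : ∀ X : C, ge0 X → ge0 (X⟦(1 : ℤ)⟧)
  le0_shift : ∀ X : C, le0 X → le0 (X⟦(-1 : ℤ)⟧)
  orth : ∀ {X Y : C}, le0 X → ge0 Y → ∀ f : X ⟶ Y⟦(1 : ℤ)⟧, f = 0
  decomp : ∀ X : C, ∃ (A B : C) (f : A ⟶ X) (g : X ⟶ B) (h : B ⟶ A⟦(1 : ℤ)⟧),
    le0 A ∧ ge0 (B⟦(-1 : ℤ)⟧) ∧ (Triangle.mk f g h ∈ distTriang C)

variable {C}

variable {D : Type u} [Category.{v} D] [Preadditive D] [HasZeroObject D] [HasShift D ℤ]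
  [∀ n : ℤ, (shiftFunctor D n).Additive] [Pretriangulated D]

namespace WeightStructure

section Aux

variable {w : WeightStructure C}

lemma le0_iff {X Y : C} (e : X ≅ Y) : w.le0 X ↔ w.le0 Y :=
  ⟨w.le0_iso e, w.le0_iso e.symm⟩

lemma ge0_iff {X Y : C} (e : X ≅ Y) : w.ge0 X ↔ w.ge0 Y :=
  ⟨w.ge0_iso e, w.ge0_iso e.symm⟩

/-- transport along `X⟦a⟧⟦b⟧ ≅ X⟦c⟧` -/
lemma le0_shift_shift_iff (X : C) (a b c : ℤ) (h : a + b = c) :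
    w.le0 ((X⟦a⟧)⟦b⟧) ↔ w.le0 (X⟦c⟧) :=
  (le0_iff (((shiftFunctorAdd' C a b c h).app X).symm))

lemma ge0_shift_shift_iff (X : C) (a b c : ℤ) (h : a + b = c) :
    w.ge0 ((X⟦a⟧)⟦b⟧) ↔ w.ge0 (X⟦c⟧) :=
  (ge0_iff (((shiftFunctorAdd' C a b c h).app X).symm))

lemma le0_shift_zero_iff (X : C) : w.le0 (X⟦(0 : ℤ)⟧) ↔ w.le0 X :=
  le0_iff ((shiftFunctorZero C ℤ).app X)

lemma ge0_shift_zero_iff (X : C) : w.ge0 (X⟦(0 : ℤ)⟧) ↔ w.ge0 X :=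
  ge0_iff ((shiftFunctorZero C ℤ).app X)

/-- `C_{w≤·}` is increasing: one step down on the shift exponent. -/
lemma le0_step (X : C) (a : ℤ) (h : w.le0 (X⟦a⟧)) : w.le0 (X⟦a - 1⟧) :=
  (le0_shift_shift_iff X a (-1) (a - 1) (by ring)).1 (w.le0_shift _ h)

lemma ge0_step (X : C) (a : ℤ) (h : w.ge0 (X⟦a⟧)) : w.ge0 (X⟦a + 1⟧) :=
  (ge0_shift_shift_iff X a 1 (a + 1) (by ring)).1 (w.ge0_shift _ h)

lemma le0_mono (X : C) (a b : ℤ) (hba : b ≤ a) (h : w.le0 (X⟦a⟧)) : w.le0 (X⟦b⟧) := by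
  obtain ⟨n, hn⟩ : ∃ n : ℕ, b = a - n := ⟨(a - b).toNat, by omega⟩
  subst hn
  clear hba
  induction n with
  | zero => simpa using h
  | succ k ih =>
      have h' := le0_step X (a - k) ih
      have e : a - ((k : ℕ) + 1 : ℕ) = a - (k : ℕ) - 1 := by push_cast; ring
      rw [e]; exact h'

lemma ge0_mono (X : C) (a b : ℤ) (hab : a ≤ b) (h : w.ge0 (X⟦a⟧)) : w.ge0 (X⟦b⟧) := by
  obtain ⟨n, hn⟩ : ∃ n : ℕ, b = a + n := ⟨(b - a).toNat, by omega⟩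
  subst hn
  clear hab
  induction n with
  | zero => simpa using h
  | succ k ih =>
      have h' := ge0_step X (a + k) ih
      have e : a + ((k : ℕ) + 1 : ℕ) = a + (k : ℕ) + 1 := by push_cast; ring
      rw [e]; exact h'

/-- Orthogonality, restated: no maps from `C_{w≤0}` to `C_{w≥1}`. -/
lemma orth' {X Y : C} (hX : w.le0 X) (hY : w.ge0 (Y⟦(-1 : ℤ)⟧)) (f : X ⟶ Y) : f = 0 := by
  have e : (Y⟦(-1 : ℤ)⟧)⟦(1 : ℤ)⟧ ≅ Y :=
    (shiftFunctorCompIsoId C (-1 : ℤ) (1 : ℤ) (by ring)).app Y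
  have h0 : f ≫ e.inv = 0 := w.orth hX hY _
  rw [← comp_id f, ← e.inv_hom_id, ← assoc, h0, zero_comp]

/-- `C_{w≤0}` is closed under extensions. -/
lemma ext_le0 (w : WeightStructure C) (T : Triangle C) (hT : T ∈ distTriang C)
    (h1 : w.le0 T.obj₁) (h3 : w.le0 T.obj₃) : w.le0 T.obj₂ := by
  obtain ⟨A, B, f, g, h, hA, hB, hd⟩ := w.decomp T.obj₂
  have hcomp : T.mor₁ ≫ g = 0 := orth' h1 hB _
  obtain ⟨φ, hφ⟩ := Triangle.yoneda_exact₂ T hT g hcomp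
  have hφ0 : φ = 0 := orth' h3 hB φ
  have hg0 : g = 0 := by rw [hφ, hφ0, comp_zero]
  obtain ⟨s, hs⟩ := Triangle.coyoneda_exact₂ _ hd (𝟙 T.obj₂) (by change 𝟙 T.obj₂ ≫ g = 0; rw [hg0]; exact comp_zero)
  exact w.le0_retract s f hs.symm hA

/-- `C_{w≥0}` is closed under extensions. -/
lemma ext_ge0 (w : WeightStructure C) (T : Triangle C) (hT : T ∈ distTriang C)
    (h1 : w.ge0 T.obj₁) (h3 : w.ge0 T.obj₃) : w.ge0 T.obj₂ := by
  obtain ⟨A, B, f, g, h, hA, hB, hd⟩ := w.decomp (T.obj₂⟦(1 : ℤ)⟧)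
  -- triple rotation of T is (T.obj₁⟦1⟧, T.obj₂⟦1⟧, T.obj₃⟦1⟧, ...)
  have hT3 := rot_of_distTriang _ (rot_of_distTriang _ (rot_of_distTriang _ hT))
  have hcomp : f ≫ T.rotate.rotate.rotate.mor₂ = 0 := by
    have : f ≫ (T.mor₂⟦(1 : ℤ)⟧') = 0 := w.orth hA h3 _
    dsimp [Triangle.rotate]
    simp [this]
    exact (Preadditive.comp_neg f ((shiftFunctor C (1 : ℤ)).map T.mor₂)).trans (by rw [this, neg_zero]; rfl)
  obtain ⟨ψ, hψ⟩ := Triangle.coyoneda_exact₂ _ hT3 f hcomp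
  have hψ0 : ψ = 0 := by
    have : (ψ : A ⟶ T.obj₁⟦(1 : ℤ)⟧) = 0 := w.orth hA h1 ψ
    exact this
  have hf0 : f = 0 := by rw [hψ, hψ0, zero_comp]; rfl
  obtain ⟨r, hr⟩ := Triangle.yoneda_exact₂ _ hd (𝟙 (T.obj₂⟦(1 : ℤ)⟧)) (by change f ≫ _ = 0; rw [hf0]; exact zero_comp)
  change B ⟶ T.obj₂⟦(1 : ℤ)⟧ at r
  have hgr : g ≫ r = 𝟙 (T.obj₂⟦(1 : ℤ)⟧) := hr.symm
  have hret : (g⟦(-1 : ℤ)⟧') ≫ (r⟦(-1 : ℤ)⟧') = 𝟙 _ := by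
    rw [← Functor.map_comp, hgr]; exact (shiftFunctor C (-1 : ℤ)).map_id _
  have hg : w.ge0 ((T.obj₂⟦(1 : ℤ)⟧)⟦(-1 : ℤ)⟧) := w.ge0_retract _ _ hret hB
  exact (ge0_shift_zero_iff T.obj₂).1 ((ge0_shift_shift_iff T.obj₂ 1 (-1) 0 (by ring)).1 hg)

/-- Extension-closedness of the shifted classes `C_{w≤n}`. -/
lemma ext_le0_shift (w : WeightStructure C) (T : Triangle C) (hT : T ∈ distTriang C) (n : ℤ)
    (h1 : w.le0 (T.obj₁⟦n⟧)) (h3 : w.le0 (T.obj₃⟦n⟧)) : w.le0 (T.obj₂⟦n⟧) :=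
  w.ext_le0 _ (Triangle.shift_distinguished T hT n) h1 h3

lemma ext_ge0_shift (w : WeightStructure C) (T : Triangle C) (hT : T ∈ distTriang C) (n : ℤ)
    (h1 : w.ge0 (T.obj₁⟦n⟧)) (h3 : w.ge0 (T.obj₃⟦n⟧)) : w.ge0 (T.obj₂⟦n⟧) :=
  w.ext_ge0 _ (Triangle.shift_distinguished T hT n) h1 h3

end Aux

end WeightStructure

open WeightStructure

/-- If `C` carries a *bounded* weight structure (every object lies in some `C_{w≥a} ∩ C_{w≤b}`)
and `F : C ⥤ D` is an exact (triangulated) functor sending the heart of `C` into the heart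
of `D`, then `F` is weight-exact: `F(C_{w≤0}) ⊆ D_{w≤0}` and `F(C_{w≥0}) ⊆ D_{w≥0}`. -/
theorem weight_exact_of_heart_to_heart (wC : WeightStructure C) (wD : WeightStructure D)
    (hbdd : ∀ X : C, ∃ a b : ℤ, a ≤ b ∧ wC.ge0 (X⟦(-a : ℤ)⟧) ∧ wC.le0 (X⟦(-b : ℤ)⟧))
    (F : C ⥤ D) [F.CommShift ℤ] [F.IsTriangulated]
    (hheart : ∀ X : C, wC.le0 X → wC.ge0 X → wD.le0 (F.obj X) ∧ wD.ge0 (F.obj X)) :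
    (∀ X : C, wC.le0 X → wD.le0 (F.obj X)) ∧ (∀ X : C, wC.ge0 X → wD.ge0 (F.obj X)) := by
  -- main induction on the weight-length
  have key : ∀ n : ℕ, ∀ (b : ℤ) (X : C), 0 ≤ b → b.toNat = n → wC.ge0 X →
      wC.le0 (X⟦(-b : ℤ)⟧) → wD.ge0 (F.obj X) ∧ wD.le0 ((F.obj X)⟦(-b : ℤ)⟧) := by
    intro n
    induction n with
    | zero =>
        intro b X hb hbn hge hle
        have hb0 : b = 0 := by omega
        subst hb0
        have hleX : wC.le0 X := (le0_shift_zero_iff X).1 (by simpa using hle)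
        obtain ⟨hFle, hFge⟩ := hheart X hleX hge
        refine ⟨hFge, ?_⟩
        simpa using (le0_shift_zero_iff (w := wD) (F.obj X)).2 hFle
    | succ k ih =>
        intro b X hb hbn hge hle
        obtain ⟨A, B, f, g, h, hA, hB, hd⟩ := wC.decomp X
        -- `A` lies in the heart of `C`
        have hgeA : wC.ge0 A := wC.ext_ge0 _ (inv_rot_of_distTriang _ hd) hB hge
        have hb1 : 1 ≤ b := by omega
        -- `B` lies in `C_{w≥1} ∩ C_{w≤b}`
        have hleB : wC.le0 (B⟦(-b : ℤ)⟧) := by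
          apply wC.ext_le0_shift _ (rot_of_distTriang _ hd) (-b) hle
          refine (le0_shift_shift_iff A 1 (-b) (1 - b) (by ring)).2 ?_
          exact le0_mono A 0 (1 - b) (by omega) ((le0_shift_zero_iff A).2 hA)
        have hleB' : wC.le0 ((B⟦(-1 : ℤ)⟧)⟦(-(b - 1) : ℤ)⟧) :=
          (le0_shift_shift_iff B (-1) (-(b - 1)) (-b) (by ring)).2 hleB
        obtain ⟨hFgeB', hFleB'⟩ := ih (b - 1) (B⟦(-1 : ℤ)⟧) (by omega) (by omega) hB hleB'
        have e : F.obj (B⟦(-1 : ℤ)⟧) ≅ (F.obj B)⟦(-1 : ℤ)⟧ := (F.commShiftIso (-1 : ℤ)).app B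
        have hFgeB : wD.ge0 (F.obj B) := by
          have h1 : wD.ge0 ((F.obj B)⟦(-1 : ℤ)⟧) := wD.ge0_iso e hFgeB'
          exact (ge0_shift_zero_iff _).1 (ge0_mono (F.obj B) (-1) 0 (by omega) h1)
        have hFleB : wD.le0 ((F.obj B)⟦(-b : ℤ)⟧) := by
          have h1 : wD.le0 (((F.obj B)⟦(-1 : ℤ)⟧)⟦(-(b - 1) : ℤ)⟧) :=
            wD.le0_iso ((shiftFunctor D (-(b - 1) : ℤ)).mapIso e) hFleB'
          exact (le0_shift_shift_iff (F.obj B) (-1) (-(b - 1)) (-b) (by ring)).1 h1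
        obtain ⟨hFleA, hFgeA⟩ := hheart A hA hgeA
        have hdF := F.map_distinguished _ hd
        constructor
        · exact wD.ext_ge0 _ hdF hFgeA hFgeB
        · apply wD.ext_le0_shift _ hdF (-b) ?_ hFleB
          exact le0_mono (F.obj A) 0 (-b) (by omega) ((le0_shift_zero_iff _).2 hFleA)
  constructor
  · intro X hX
    obtain ⟨a, b, hab, hga, hlb⟩ := hbdd X
    have hga' : wC.ge0 (X⟦(-(min a 0) : ℤ)⟧) := ge0_mono X (-a) (-(min a 0)) (by omega) hga
    have hlb' : wC.le0 (X⟦(-(min b 0) : ℤ)⟧) := by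
      rcases min_cases b 0 with ⟨he, _⟩ | ⟨he, _⟩
      · rw [he]; exact hlb
      · rw [he]; simpa using (le0_shift_zero_iff X).2 hX
    have hleY : wC.le0 ((X⟦(-(min a 0) : ℤ)⟧)⟦(-(min b 0 - min a 0) : ℤ)⟧) :=
      (le0_shift_shift_iff X (-(min a 0)) (-(min b 0 - min a 0)) (-(min b 0)) (by ring)).2 hlb'
    obtain ⟨-, hFle⟩ := key (min b 0 - min a 0).toNat (min b 0 - min a 0) _ (by omega) rfl
      hga' hleY
    have e : F.obj (X⟦(-(min a 0) : ℤ)⟧) ≅ (F.obj X)⟦(-(min a 0) : ℤ)⟧ :=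
      (F.commShiftIso (-(min a 0) : ℤ)).app X
    have h1 : wD.le0 (((F.obj X)⟦(-(min a 0) : ℤ)⟧)⟦(-(min b 0 - min a 0) : ℤ)⟧) :=
      wD.le0_iso ((shiftFunctor D (-(min b 0 - min a 0) : ℤ)).mapIso e) hFle
    have h2 : wD.le0 ((F.obj X)⟦(-(min b 0) : ℤ)⟧) :=
      (le0_shift_shift_iff (F.obj X) (-(min a 0)) (-(min b 0 - min a 0)) (-(min b 0))
        (by ring)).1 h1
    exact (le0_shift_zero_iff _).1 (le0_mono (F.obj X) (-(min b 0)) 0 (by omega) h2)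
  · intro X hX
    obtain ⟨a, b, hab, hga, hlb⟩ := hbdd X
    have hga' : wC.ge0 (X⟦(-(max a 0) : ℤ)⟧) := by
      rcases max_cases a 0 with ⟨he, _⟩ | ⟨he, _⟩
      · rw [he]; exact hga
      · rw [he]; simpa using (ge0_shift_zero_iff X).2 hX
    have hlb' : wC.le0 (X⟦(-(max b 0) : ℤ)⟧) := le0_mono X (-b) (-(max b 0)) (by omega) hlb
    have hleY : wC.le0 ((X⟦(-(max a 0) : ℤ)⟧)⟦(-(max b 0 - max a 0) : ℤ)⟧) :=
      (le0_shift_shift_iff X (-(max a 0)) (-(max b 0 - max a 0)) (-(max b 0)) (by ring)).2 hlb'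
    have hgeY : wC.ge0 (X⟦(-(max a 0) : ℤ)⟧) := hga'
    obtain ⟨hFge, -⟩ := key (max b 0 - max a 0).toNat (max b 0 - max a 0) _ (by omega) rfl
      hgeY hleY
    have e : F.obj (X⟦(-(max a 0) : ℤ)⟧) ≅ (F.obj X)⟦(-(max a 0) : ℤ)⟧ :=
      (F.commShiftIso (-(max a 0) : ℤ)).app X
    have h1 : wD.ge0 ((F.obj X)⟦(-(max a 0) : ℤ)⟧) := wD.ge0_iso e hFge
    exact (ge0_shift_zero_iff _).1 (ge0_mono (F.obj X) (-(max a 0)) 0 (by omega) h1)
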